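/- If N is a positive integer divisible by 7 but not by 9, and n is an integer with n ≡ 0, 1, 2, 5, or 6 (mod 7), then there exist integers u, v with n ≡ u³ + v³ (mod N) — equivalently, for N with 7 | N the solvability of n ≡ u³ + v³ (mod 7) is necessary for solvability mod N. -/

import Mathlib

/-- Solvability of `x³ + y³ = n` in `ZMod m`. -/
def SolCubes (m : ℕ) (n : ℤ) : Prop := ∃ x y : ZMod m, x ^ 3 + y ^ 3 = (n : ZMod m)

lemma solCubes_mul {a b : ℕ} (h : Nat.Coprime a b) {n : ℤ}
    (ha : SolCubes a n) (hb : SolCubes b n) : SolCubes (a * b) n := by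
  obtain ⟨x₁, y₁, h₁⟩ := ha
  obtain ⟨x₂, y₂, h₂⟩ := hb
  let e := ZMod.chineseRemainder h
  refine ⟨e.symm (x₁, x₂), e.symm (y₁, y₂), e.injective ?_⟩
  rw [map_add, map_pow, map_pow, RingEquiv.apply_symm_apply, RingEquiv.apply_symm_apply,
    map_intCast]
  ext <;> simp [Prod.pow_def, h₁, h₂]

lemma solCubes_of_modEq {p : ℕ} {x y n : ℤ} (h : x ^ 3 + y ^ 3 ≡ n [ZMOD p]) :
    SolCubes p n := by
  refine ⟨(x : ZMod p), (y : ZMod p), ?_⟩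
  have := (ZMod.intCast_eq_intCast_iff _ _ _).mpr h
  push_cast at this
  exact this

/-- Hensel lifting for `x³ + y³ ≡ n` at a prime `p` not dividing `3x²`. -/
lemma hensel_cubes {p : ℕ} (hp : p.Prime) {x y n : ℤ}
    (h : x ^ 3 + y ^ 3 ≡ n [ZMOD (p : ℤ)]) (hx : ¬ (p : ℤ) ∣ 3 * x ^ 2) :
    ∀ k : ℕ, 0 < k → ∃ X Y : ℤ, X ^ 3 + Y ^ 3 ≡ n [ZMOD ((p : ℤ) ^ k)] ∧ X ≡ x [ZMOD (p : ℤ)] := by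
  haveI : Fact p.Prime := ⟨hp⟩
  intro k hk
  induction k with
  | zero => exact absurd hk (by simp)
  | succ k ih =>
    rcases Nat.eq_zero_or_pos k with hk0 | hk0
    · subst hk0
      exact ⟨x, y, by simpa using h, Int.ModEq.refl x⟩
    obtain ⟨X, Y, hXY, hXx⟩ := ih hk0
    obtain ⟨c, hc⟩ : ((p : ℤ) ^ k) ∣ (n - (X ^ 3 + Y ^ 3)) := hXY.dvd
    have hX3 : ¬ (p : ℤ) ∣ 3 * X ^ 2 := by
      intro hd
      apply hx
      have h1 : (p : ℤ) ∣ (3 * x ^ 2 - 3 * X ^ 2) := ((hXx.pow 2).mul_left 3).dvd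
      have := dvd_add h1 hd
      simpa using this
    have hX3' : ((3 * X ^ 2 : ℤ) : ZMod p) ≠ 0 := fun h0 => hX3 <|
      (ZMod.intCast_zmod_eq_zero_iff_dvd _ p).mp h0
    set d : ZMod p := ((3 * X ^ 2 : ℤ) : ZMod p)⁻¹ * ((c : ℤ) : ZMod p) with hd
    set t : ℤ := (d.val : ℤ) with ht
    have htd : ((t : ℤ) : ZMod p) = d := by
      rw [ht]
      push_cast
      exact ZMod.natCast_rightInverse d
    have hkey : ((3 * X ^ 2 * t - c : ℤ) : ZMod p) = 0 := by
      push_cast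
      rw [htd, hd, ← mul_assoc]
      push_cast
      rw [mul_inv_cancel₀ (by push_cast at hX3' ⊢; exact hX3'), one_mul, sub_self]
    obtain ⟨s, hs⟩ : (p : ℤ) ∣ (3 * X ^ 2 * t - c) := (ZMod.intCast_zmod_eq_zero_iff_dvd _ p).mp hkey
    obtain ⟨k', rfl⟩ : ∃ k', k = k' + 1 := ⟨k - 1, (Nat.succ_pred_eq_of_pos hk0).symm⟩
    refine ⟨X + t * (p : ℤ) ^ (k' + 1), Y, ?_, ?_⟩
    · have hdvd : ((p:ℤ) ^ (k' + 1 + 1)) ∣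
          (n - ((X + t * (p : ℤ) ^ (k' + 1)) ^ 3 + Y ^ 3)) := by
        refine ⟨-(s + (p : ℤ) ^ k' * (3 * X * t ^ 2 + t ^ 3 * (p : ℤ) ^ (k' + 1))), ?_⟩
        linear_combination hc - (p : ℤ) ^ (k' + 1) * hs
      exact Int.modEq_iff_dvd.mpr hdvd
    · have h0 : t * (p : ℤ) ^ (k' + 1) ≡ 0 [ZMOD (p : ℤ)] :=
        Int.modEq_zero_iff_dvd.mpr ⟨t * (p : ℤ) ^ k', by ring⟩
      have := (Int.ModEq.add_left X h0).trans (by simpa using hXx)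
      simpa using this

/-- If `3 ∤ p - 1`, cubing is surjective on `ZMod p`. -/
lemma cube_surj {p : ℕ} (hp : p.Prime) (h3 : ¬ 3 ∣ (p - 1)) (a : ZMod p) :
    ∃ t : ZMod p, t ^ 3 = a := by
  haveI : Fact p.Prime := ⟨hp⟩
  have hinj : Function.Injective (fun t : ZMod p => t ^ 3) := by
    intro s t hst
    simp only at hst
    rcases eq_or_ne t 0 with rfl | ht
    · have h0 : s ^ 3 = 0 := by simpa using hst
      exact pow_eq_zero_iff (by norm_num : 3 ≠ 0) |>.mp h0
    rcases eq_or_ne s 0 with rfl | hs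
    · have h0 : t ^ 3 = 0 := by simpa using hst.symm
      exact (pow_eq_zero_iff (by norm_num : 3 ≠ 0) |>.mp h0).symm
    lift s to (ZMod p)ˣ using isUnit_iff_ne_zero.mpr hs
    lift t to (ZMod p)ˣ using isUnit_iff_ne_zero.mpr ht
    have h1 : s ^ 3 = t ^ 3 := Units.ext (by push_cast; exact hst)
    have h2 : (s * t⁻¹) ^ 3 = 1 := by
      rw [mul_pow, h1]
      group
    have ho : orderOf (s * t⁻¹) ∣ 3 := orderOf_dvd_of_pow_eq_one h2
    have hc : orderOf (s * t⁻¹) ∣ (p - 1) := by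
      have := orderOf_dvd_card (x := s * t⁻¹)
      rwa [ZMod.card_units_eq_totient, Nat.totient_prime hp] at this
    have hcop : Nat.Coprime 3 (p - 1) := (Nat.Prime.coprime_iff_not_dvd Nat.prime_three).mpr h3
    have h1' : orderOf (s * t⁻¹) = 1 := Nat.eq_one_of_dvd_coprimes hcop ho hc
    have : s * t⁻¹ = 1 := orderOf_eq_one_iff.mp h1'
    have : s = t := by
      have := mul_eq_one_iff_eq_inv.mp this
      simpa using this
    rw [this]
  exact Finite.injective_iff_surjective.mp hinj a

open Finset

lemma exists_cubic_char (p : ℕ) [Fact p.Prime] (h3 : 3 ∣ (p - 1)) :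
    ∃ χ : MulChar (ZMod p) ℂ, orderOf χ = 3 := by
  haveI : NeZero (Monoid.exponent (ZMod p)ˣ) :=
    ⟨(Monoid.exponent_pos.mpr (Monoid.ExponentExists.of_finite)).ne'⟩
  haveI : Fintype (MulChar (ZMod p) ℂ) := Fintype.ofFinite _
  have hcard : Fintype.card (MulChar (ZMod p) ℂ) = p - 1 := by
    rw [← Nat.card_eq_fintype_card,
      MulChar.card_eq_card_units_of_hasEnoughRootsOfUnity (ZMod p) ℂ,
      Nat.card_eq_fintype_card, ZMod.card_units_eq_totient,
      Nat.totient_prime (Fact.out : p.Prime)]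
  exact exists_prime_orderOf_dvd_card 3 (by rw [hcard]; exact h3)

section zeta
variable {p : ℕ} [Fact p.Prime]

lemma exists_zeta (h3 : 3 ∣ (p - 1)) :
    ∃ ζ : ZMod p, orderOf ζ = 3 := by
  have h3' : 3 ∣ Fintype.card (ZMod p)ˣ := by
    rwa [ZMod.card_units_eq_totient, Nat.totient_prime (Fact.out : p.Prime)]
  obtain ⟨ζ, hζ⟩ := exists_prime_orderOf_dvd_card 3 h3'
  exact ⟨(ζ : ZMod p), by rwa [orderOf_units]⟩

variable {ζ : ZMod p} (hζ : orderOf ζ = 3)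
include hζ

lemma zeta_pow : ζ ^ 3 = 1 := hζ ▸ pow_orderOf_eq_one ζ

lemma zeta_ne_one : ζ ≠ 1 := by
  intro h
  rw [h, orderOf_one] at hζ
  norm_num at hζ

lemma zeta_sum : 1 + ζ + ζ ^ 2 = 0 := by
  have h1 : (ζ - 1) * (ζ ^ 2 + ζ + 1) = 0 := by
    have := zeta_pow hζ
    linear_combination this
  rcases mul_eq_zero.mp h1 with h | h
  · exact absurd (sub_eq_zero.mp h) (zeta_ne_one hζ)
  · linear_combination h

lemma cube_eq_one_iff (y : ZMod p) : y ^ 3 = 1 ↔ y = 1 ∨ y = ζ ∨ y = ζ ^ 2 := by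
  constructor
  · intro hy
    have hfac : (y - 1) * (y - ζ) * (y - ζ ^ 2) = 0 := by
      have h1 := zeta_pow hζ
      have h2 := zeta_sum hζ
      linear_combination hy + (y - y ^ 2) * h2 + (y - 1) * h1
    rcases mul_eq_zero.mp hfac with h | h
    · rcases mul_eq_zero.mp h with h | h
      · exact Or.inl (sub_eq_zero.mp h)
      · exact Or.inr (Or.inl (sub_eq_zero.mp h))
    · exact Or.inr (Or.inr (sub_eq_zero.mp h))
  · rintro (rfl | rfl | rfl)
    · simp
    · exact zeta_pow hζ
    · rw [← pow_mul]
      have := zeta_pow hζ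
      calc ζ ^ (2*3) = (ζ^3)^2 := by ring
        _ = 1 := by rw [this]; ring

end zeta


section counting
variable {p : ℕ} [Fact p.Prime] {ζ : ZMod p} (hζ : orderOf ζ = 3)

lemma card_cube_roots_one (hζ : orderOf ζ = 3) :
    (univ.filter (fun t : ZMod p => t ^ 3 = 1)).card = 3 := by
  have h1 : univ.filter (fun t : ZMod p => t ^ 3 = 1) = {1, ζ, ζ ^ 2} := by
    ext y
    simp only [mem_filter, mem_univ, true_and, mem_insert, mem_singleton]
    exact cube_eq_one_iff hζ y
  rw [h1]
  have hne1 : ζ ≠ 1 := zeta_ne_one hζ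
  have hζ0 : ζ ≠ 0 := by
    intro h
    have := zeta_pow hζ
    rw [h] at this
    simp at this
  have h21 : ζ ^ 2 ≠ 1 := by
    intro h
    have := orderOf_dvd_of_pow_eq_one h
    rw [hζ] at this
    norm_num at this
  have h2ζ : ζ ^ 2 ≠ ζ := by
    intro h
    apply hne1
    have : ζ * ζ = ζ * 1 := by rw [mul_one]; linear_combination h
    exact mul_left_cancel₀ hζ0 this
  rw [card_insert_of_notMem (by simp [hne1.symm, h21.symm]),
    card_insert_of_notMem (by simp [h2ζ.symm])]
  simp

lemma card_cube_roots (hζ : orderOf ζ = 3) {a e : ZMod p} (he : e ≠ 0) (hea : e ^ 3 = a) :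
    (univ.filter (fun t : ZMod p => t ^ 3 = a)).card = 3 := by
  have himg : univ.filter (fun t : ZMod p => t ^ 3 = a)
      = (univ.filter (fun t : ZMod p => t ^ 3 = 1)).image (fun y => e * y) := by
    ext t
    simp only [mem_filter, mem_univ, true_and, mem_image]
    constructor
    · intro ht
      refine ⟨e⁻¹ * t, ?_, by field_simp⟩
      rw [mul_pow, ht, ← hea]
      field_simp
    · rintro ⟨y, hy, rfl⟩
      rw [mul_pow, hy, mul_one, hea]
  rw [himg, card_image_of_injective _ (mul_right_injective₀ he), card_cube_roots_one hζ]

lemma card_cube_roots_zero :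
    (univ.filter (fun t : ZMod p => t ^ 3 = (0 : ZMod p))).card = 1 := by
  have : univ.filter (fun t : ZMod p => t ^ 3 = (0 : ZMod p)) = {0} := by
    ext t
    simp only [mem_filter, mem_univ, true_and, mem_singleton]
    rw [pow_eq_zero_iff (by norm_num : 3 ≠ 0)]
  rw [this, card_singleton]

end counting

section chi
variable {p : ℕ} [Fact p.Prime] {χ : MulChar (ZMod p) ℂ} (hχ : orderOf χ = 3)
include hχ

lemma chi_ne_one : χ ≠ 1 := by
  intro h
  rw [h, orderOf_one] at hχ
  norm_num at hχ

lemma chi_sq_ne_one : χ ^ 2 ≠ 1 := by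
  intro h
  have := orderOf_dvd_of_pow_eq_one h
  rw [hχ] at this
  norm_num at this

lemma chi_cubed : χ ^ 3 = 1 := hχ ▸ pow_orderOf_eq_one χ

lemma chi_val_cubed {a : ZMod p} (ha : a ≠ 0) : (χ a) ^ 3 = 1 := by
  lift a to (ZMod p)ˣ using isUnit_iff_ne_zero.mpr ha
  rw [← MulChar.pow_apply' χ (by norm_num) (a : ZMod p), chi_cubed hχ,
    MulChar.one_apply_coe]

lemma chi_nonzero {a : ZMod p} (ha : a ≠ 0) : χ a ≠ 0 := by
  intro h
  have := chi_val_cubed hχ ha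
  rw [h] at this
  norm_num at this

lemma chi_cube_arg {t : ZMod p} (ht : t ≠ 0) : χ (t ^ 3) = 1 := by
  rw [map_pow]
  exact chi_val_cubed hχ ht

/-- If `χ a = 1` for `a ≠ 0`, then `a` is a cube. -/
lemma cube_of_chi_eq_one {a : ZMod p} (ha : a ≠ 0) (h1 : χ a = 1) :
    ∃ t : ZMod p, t ^ 3 = a := by
  obtain ⟨g, hg⟩ := IsCyclic.exists_generator (α := (ZMod p)ˣ)
  lift a to (ZMod p)ˣ using isUnit_iff_ne_zero.mpr ha
  obtain ⟨k, hk⟩ : ∃ k : ℕ, g ^ k = a := by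
    have := hg a
    rwa [← mem_powers_iff_mem_zpowers, Submonoid.mem_powers_iff] at this
  have hgne : χ (g : ZMod p) ≠ 1 := by
    intro hone
    apply chi_ne_one hχ
    rw [MulChar.eq_one_iff]
    intro u
    obtain ⟨m, hm⟩ : ∃ m : ℕ, g ^ m = u := by
      have := hg u
      rwa [← mem_powers_iff_mem_zpowers, Submonoid.mem_powers_iff] at this
    rw [← hm]
    push_cast
    rw [map_pow, hone, one_pow]
  have hord : orderOf (χ (g : ZMod p)) = 3 := by
    have h3 : (χ (g : ZMod p)) ^ 3 = 1 := chi_val_cubed hχ (Units.ne_zero g)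
    have hdv := orderOf_dvd_of_pow_eq_one h3
    rcases (Nat.prime_three.eq_one_or_self_of_dvd _ hdv) with h | h
    · exact absurd (orderOf_eq_one_iff.mp h) hgne
    · exact h
  have hdvd : 3 ∣ k := by
    rw [← hord]
    apply orderOf_dvd_of_pow_eq_one
    rw [← map_pow, ← Units.val_pow_eq_pow_val, hk]
    exact h1
  obtain ⟨m, rfl⟩ := hdvd
  refine ⟨((g ^ m : (ZMod p)ˣ) : ZMod p), ?_⟩
  push_cast [← hk]
  rw [← pow_mul, mul_comm]

end chi

section main
variable {p : ℕ} [Fact p.Prime] {ζ : ZMod p} {χ : MulChar (ZMod p) ℂ}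

lemma card_eq_char_sum (hζ : orderOf ζ = 3) (hχ : orderOf χ = 3) (a : ZMod p) :
    ((univ.filter (fun t : ZMod p => t ^ 3 = a)).card : ℂ) = 1 + χ a + (χ a) ^ 2 := by
  rcases eq_or_ne a 0 with rfl | ha
  · rw [card_cube_roots_zero, MulChar.map_nonunit χ not_isUnit_zero]
    norm_num
  by_cases h1 : χ a = 1
  · obtain ⟨t, ht⟩ := cube_of_chi_eq_one hχ ha h1
    have ht0 : t ≠ 0 := by
      intro h
      rw [h] at ht
      simp only [ne_eq] at ha
      exact ha (by simpa using ht.symm)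
    rw [card_cube_roots hζ ht0 ht, h1]
    norm_num
  · have hempty : univ.filter (fun t : ZMod p => t ^ 3 = a) = ∅ := by
      rw [filter_eq_empty_iff]
      intro t _
      intro ht
      apply h1
      rw [← ht]
      apply chi_cube_arg hχ
      intro h0
      rw [h0] at ht
      exact ha (by simpa using ht.symm)
    rw [hempty]
    have hx3 : (χ a) ^ 3 = 1 := chi_val_cubed hχ ha
    have hfac : (χ a - 1) * ((χ a) ^ 2 + χ a + 1) = 0 := by linear_combination hx3
    rcases mul_eq_zero.mp hfac with h | h
    · exact absurd (sub_eq_zero.mp h) h1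
    · simp only [card_empty, Nat.cast_zero]
      linear_combination -h

lemma sum_cube_fiberwise (g : ZMod p → ℂ) :
    ∑ u : ZMod p, g (u ^ 3)
      = ∑ a : ZMod p, ((univ.filter (fun t : ZMod p => t ^ 3 = a)).card : ℂ) * g a := by
  rw [← Finset.sum_fiberwise univ (fun u : ZMod p => u ^ 3) (fun u => g (u ^ 3))]
  refine Finset.sum_congr rfl fun a _ => ?_
  rw [Finset.sum_congr rfl (fun u hu => by
      rw [(Finset.mem_filter.mp hu).2]), Finset.sum_const, nsmul_eq_mul]

lemma twist_sum (φ ψ : MulChar (ZMod p) ℂ) {n : ZMod p} (hn : n ≠ 0) :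
    ∑ a : ZMod p, φ a * ψ (n - a) = φ n * ψ n * jacobiSum φ ψ := by
  have := Equiv.sum_comp (Equiv.mulLeft₀ n hn) (fun a : ZMod p => φ a * ψ (n - a))
  rw [← this, jacobiSum, Finset.mul_sum]
  refine Finset.sum_congr rfl fun t _ => ?_
  simp only [Equiv.mulLeft₀_apply]
  rw [show n - n * t = n * (1 - t) by ring, map_mul, map_mul]
  ring

end main

lemma abs_eq_one_of_cube_eq_one (c : ℂ) (h : c ^ 3 = 1) : ‖c‖ = 1 := by
  have h' : ‖c‖ ^ 3 = 1 := by
    rw [← norm_pow, h, norm_one]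
  have hnn : 0 ≤ ‖c‖ := norm_nonneg c
  nlinarith [sq_nonneg (‖c‖ - 1), sq_nonneg (‖c‖ + 1),
    sq_nonneg (‖c‖)]

lemma conj_chi {p : ℕ} [Fact p.Prime] {χ : MulChar (ZMod p) ℂ} (hχ : orderOf χ = 3)
    (x : ZMod p) : (starRingEnd ℂ) (χ x) = (χ x) ^ 2 := by
  rcases eq_or_ne x 0 with rfl | hx
  · rw [MulChar.map_nonunit χ not_isUnit_zero]
    simp
  have h3 : (χ x) ^ 3 = 1 := chi_val_cubed hχ hx
  have habs : ‖χ x‖ = 1 := abs_eq_one_of_cube_eq_one _ h3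
  have hinv : (χ x)⁻¹ = (starRingEnd ℂ) (χ x) := Complex.inv_eq_conj habs
  have h2 : (χ x) ^ 2 * (χ x) = 1 := by rw [← pow_succ]; exact h3
  rw [← hinv, eq_comm]
  exact eq_inv_of_mul_eq_one_left h2

theorem cubes_cover {p : ℕ} [Fact p.Prime] (h3 : 3 ∣ (p - 1)) (hp7 : p ≠ 7)
    {n : ZMod p} (hn : n ≠ 0) : ∃ a b : ZMod p, a ^ 3 + b ^ 3 = n := by
  by_contra hcon
  push_neg at hcon
  have hp : p.Prime := Fact.out
  have hp13 : 13 ≤ p := by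
    by_contra hlt
    push_neg at hlt
    interval_cases p <;> revert h3 hp7 hp <;> decide
  obtain ⟨ζ, hζ⟩ := exists_zeta (p := p) h3
  obtain ⟨χ, hχ⟩ := exists_cubic_char p h3
  -- the count of solutions, as a complex number, is zero
  have hzero : ∑ a : ZMod p,
      ((univ.filter (fun t : ZMod p => t ^ 3 = a)).card : ℂ)
        * ((univ.filter (fun t : ZMod p => t ^ 3 = (n - a))).card : ℂ) = 0 := by
    rw [← sum_cube_fiberwise (fun a => ((univ.filter
        (fun t : ZMod p => t ^ 3 = (n - a))).card : ℂ))]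
    refine Finset.sum_eq_zero fun u _ => ?_
    have : univ.filter (fun t : ZMod p => t ^ 3 = (n - u ^ 3)) = ∅ := by
      rw [filter_eq_empty_iff]
      intro v _
      intro hv
      exact hcon u v (by linear_combination hv)
    rw [this]
    simp
  -- rewrite via characters
  have hchar : ∀ a : ZMod p,
      ((univ.filter (fun t : ZMod p => t ^ 3 = a)).card : ℂ)
        * ((univ.filter (fun t : ZMod p => t ^ 3 = (n - a))).card : ℂ)
      = 1 + χ a + (χ a) ^ 2 + (χ (n - a) + (χ (n - a)) ^ 2)
        + (χ a * χ (n - a) + χ a * (χ (n - a)) ^ 2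
          + (χ a) ^ 2 * χ (n - a) + (χ a) ^ 2 * (χ (n - a)) ^ 2) := by
    intro a
    rw [card_eq_char_sum hζ hχ, card_eq_char_sum hζ hχ]
    ring
  rw [Finset.sum_congr rfl (fun a _ => hchar a)] at hzero
  simp only [Finset.sum_add_distrib] at hzero
  -- evaluate the individual sums
  have hχ1 : χ ≠ 1 := chi_ne_one hχ
  have hχ2 : χ ^ 2 ≠ 1 := chi_sq_ne_one hχ
  have e1 : ∑ _a : ZMod p, (1 : ℂ) = (p : ℂ) := by
    rw [Finset.sum_const, Finset.card_univ, ZMod.card, nsmul_eq_mul, mul_one]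
  have e2 : ∑ a : ZMod p, χ a = 0 := MulChar.sum_eq_zero_of_ne_one hχ1
  have e2' : ∑ a : ZMod p, (χ a) ^ 2 = 0 := by
    have := MulChar.sum_eq_zero_of_ne_one hχ2
    rw [← this]
    exact Finset.sum_congr rfl fun a _ => (MulChar.pow_apply' χ (by norm_num) a).symm
  have esub : ∀ g : ZMod p → ℂ, ∑ a : ZMod p, g (n - a) = ∑ a : ZMod p, g a := by
    intro g
    exact Equiv.sum_comp (Equiv.subLeft n) g
  have e3 : ∑ a : ZMod p, χ (n - a) = 0 := by rw [esub (fun a => χ a)]; exact e2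
  have e3' : ∑ a : ZMod p, (χ (n - a)) ^ 2 = 0 := by
    rw [esub (fun a => (χ a) ^ 2)]; exact e2'
  -- cross terms
  set z := jacobiSum χ χ with hz
  set w := jacobiSum (χ ^ 2) (χ ^ 2) with hw
  have hpow2 : ∀ a : ZMod p, (χ a) ^ 2 = (χ ^ 2) a := fun a =>
    (MulChar.pow_apply' χ (by norm_num) a).symm
  have hc11 : ∑ a : ZMod p, χ a * χ (n - a) = χ n * χ n * z := twist_sum χ χ hn
  have hc12 : ∑ a : ZMod p, χ a * (χ (n - a)) ^ 2 = χ n * (χ ^ 2) n * jacobiSum χ (χ ^ 2) := by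
    rw [← twist_sum χ (χ ^ 2) hn]
    exact Finset.sum_congr rfl fun a _ => by rw [hpow2]
  have hc21 : ∑ a : ZMod p, (χ a) ^ 2 * χ (n - a) = (χ ^ 2) n * χ n * jacobiSum (χ ^ 2) χ := by
    rw [← twist_sum (χ ^ 2) χ hn]
    exact Finset.sum_congr rfl fun a _ => by rw [hpow2]
  have hc22 : ∑ a : ZMod p, (χ a) ^ 2 * (χ (n - a)) ^ 2 = (χ ^ 2) n * (χ ^ 2) n * w := by
    rw [← twist_sum (χ ^ 2) (χ ^ 2) hn]
    exact Finset.sum_congr rfl fun a _ => by rw [hpow2, hpow2]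
  -- χ² = χ⁻¹, J(χ, χ²) = -1
  have hinv : χ ^ 2 = χ⁻¹ := by
    apply eq_inv_of_mul_eq_one_left
    rw [← pow_succ]
    exact chi_cubed hχ
  have hχm1 : χ (-1 : ZMod p) = 1 := by
    have hm0 : (-1 : ZMod p) ≠ 0 := by
      simpa using (one_ne_zero : (1 : ZMod p) ≠ 0)
    have hsq : (χ (-1 : ZMod p)) ^ 2 = 1 := by
      rw [← map_pow]
      norm_num
    have hcb : (χ (-1 : ZMod p)) ^ 3 = 1 := chi_val_cubed hχ hm0
    calc χ (-1 : ZMod p) = (χ (-1 : ZMod p)) ^ 2 * χ (-1 : ZMod p) := by rw [hsq, one_mul]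
      _ = (χ (-1 : ZMod p)) ^ 3 := by ring
      _ = 1 := hcb
  have hJ12 : jacobiSum χ (χ ^ 2) = -1 := by
    rw [hinv, jacobiSum_nontrivial_inv hχ1, hχm1]
  have hJ21 : jacobiSum (χ ^ 2) χ = -1 := by rw [jacobiSum_comm]; exact hJ12
  -- χ(n) is a cube root of unity
  have hn3 : (χ n) ^ 3 = 1 := chi_val_cubed hχ hn
  -- assemble the equation
  rw [e1, e2, e2', e3, e3', hc11, hc12, hc21, hc22, hJ12, hJ21] at hzero
  have hkey : (χ n) ^ 2 * z + χ n * w = 2 - (p : ℂ) := by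
    have h2n : (χ ^ 2) n = (χ n) ^ 2 := MulChar.pow_apply' χ (by norm_num) n
    rw [h2n] at hzero
    have h4 : (χ n) ^ 2 * (χ n) ^ 2 = χ n := by
      have : (χ n) ^ 2 * (χ n) ^ 2 = (χ n) ^ 3 * χ n := by ring
      rw [this, hn3, one_mul]
    linear_combination hzero + (2 - χ n * w) * hn3
  -- `w` is the conjugate of `z`, and `z * w = p`
  have hpow2' : ∀ a : ZMod p, (χ ^ 2) a = (χ a) ^ 2 := fun a =>
    MulChar.pow_apply' χ (by norm_num) a
  have hwconj : w = (starRingEnd ℂ) z := by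
    rw [hz, hw, jacobiSum, jacobiSum, map_sum]
    refine Finset.sum_congr rfl fun x _ => ?_
    rw [map_mul, conj_chi hχ, conj_chi hχ, hpow2', hpow2']
  have hzw : z * w = (p : ℂ) := by
    have hring : ringChar ℂ ≠ ringChar (ZMod p) := by
      rw [ringChar.eq_zero, ZMod.ringChar_zmod_n]
      exact fun h => hp.ne_zero h.symm
    have hne : χ * χ ≠ 1 := by
      rw [← pow_two]
      exact hχ2
    have hJ := jacobiSum_mul_jacobiSum_inv hring hχ1 hχ1 hne
    rw [← hinv] at hJ
    rw [hz, hw, hJ, ZMod.card]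
  have habsz : ‖z‖ ^ 2 = (p : ℝ) := by
    have h1 : z * (starRingEnd ℂ) z = (p : ℂ) := by rw [← hwconj]; exact hzw
    rw [Complex.mul_conj] at h1
    have h2 : (Complex.normSq z : ℝ) = (p : ℝ) := by exact_mod_cast h1
    rw [Complex.sq_norm]
    exact h2
  have habsn : ‖χ n‖ = 1 := abs_eq_one_of_cube_eq_one _ hn3
  have habsw : ‖w‖ = ‖z‖ := by rw [hwconj, Complex.norm_conj]
  -- final inequality
  have hle : ‖2 - (p : ℂ)‖ ≤ 2 * ‖z‖ := by
    rw [← hkey]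
    calc ‖(χ n) ^ 2 * z + χ n * w‖
        ≤ ‖(χ n) ^ 2 * z‖ + ‖χ n * w‖ := norm_add_le _ _
      _ = ‖z‖ + ‖w‖ := by
          rw [norm_mul, norm_mul, norm_pow, habsn]
          ring
      _ = 2 * ‖z‖ := by rw [habsw]; ring
  have habs2p : ‖2 - (p : ℂ)‖ = (p : ℝ) - 2 := by
    have hcast : (2 - (p : ℂ)) = (((2 - (p : ℝ)) : ℝ) : ℂ) := by push_cast; ring
    rw [hcast, Complex.norm_real, Real.norm_eq_abs, abs_of_nonpos (by
      have : (13 : ℝ) ≤ (p : ℝ) := by exact_mod_cast hp13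
      linarith)]
    ring
  rw [habs2p] at hle
  have hp13' : (13 : ℝ) ≤ (p : ℝ) := by exact_mod_cast hp13
  nlinarith [hle, habsz, norm_nonneg z]


lemma base_any_prime {p : ℕ} (hp : p.Prime) (h3 : p ≠ 3) (h7 : p ≠ 7) (n : ℤ) :
    ∃ x y : ℤ, x ^ 3 + y ^ 3 ≡ n [ZMOD (p : ℤ)] ∧ ¬ (p : ℤ) ∣ 3 * x ^ 2 := by
  haveI : Fact p.Prime := ⟨hp⟩
  have hmain : ∃ a b : ZMod p, a ≠ 0 ∧ a ^ 3 + b ^ 3 = (n : ZMod p) := by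
    rcases eq_or_ne ((n : ZMod p)) 0 with h0 | h0
    · exact ⟨1, -1, one_ne_zero, by rw [h0]; ring⟩
    by_cases hc : 3 ∣ (p - 1)
    · obtain ⟨a, b, hab⟩ := cubes_cover hc h7 h0
      rcases eq_or_ne a 0 with rfl | ha
      · refine ⟨b, 0, ?_, ?_⟩
        · intro hb
          rw [hb] at hab
          apply h0
          rw [← hab]
          ring
        · rw [← hab]; ring
      · exact ⟨a, b, ha, hab⟩
    · obtain ⟨t, ht⟩ := cube_surj hp hc (n : ZMod p)
      refine ⟨t, 0, ?_, by rw [ht]; ring⟩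
      intro h0'
      rw [h0', zero_pow (by norm_num : 3 ≠ 0)] at ht
      exact h0 ht.symm
  obtain ⟨a, b, ha, hab⟩ := hmain
  obtain ⟨x, rfl⟩ := ZMod.intCast_surjective a
  obtain ⟨y, rfl⟩ := ZMod.intCast_surjective b
  refine ⟨x, y, ?_, ?_⟩
  · rw [← ZMod.intCast_eq_intCast_iff]
    push_cast
    exact hab
  · intro hdvd
    have h30 : ((3 * x ^ 2 : ℤ) : ZMod p) = 0 := (ZMod.intCast_zmod_eq_zero_iff_dvd _ p).mpr hdvd
    push_cast at h30
    have h3p : (3 : ZMod p) ≠ 0 := by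
      intro h
      have : ((3 : ℕ) : ZMod p) = 0 := by exact_mod_cast h
      have := (ZMod.natCast_eq_zero_iff 3 p).mp this
      have := (Nat.prime_dvd_prime_iff_eq hp Nat.prime_three).mp this
      exact h3 this
    rcases mul_eq_zero.mp h30 with h | h
    · exact h3p h
    · exact ha (pow_eq_zero_iff (by norm_num : 2 ≠ 0) |>.mp h)

lemma solCubes_prime_pow {p k : ℕ} (hp : p.Prime) (hk : 0 < k) (h9 : ¬ 9 ∣ p ^ k) (n : ℤ)
    (hn : n % 7 = 0 ∨ n % 7 = 1 ∨ n % 7 = 2 ∨ n % 7 = 5 ∨ n % 7 = 6) :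
    SolCubes (p ^ k) n := by
  by_cases hp3 : p = 3
  · subst hp3
    have hk1 : k = 1 := by
      by_contra hk1
      have hk2 : 2 ≤ k := by omega
      exact h9 (by calc (9 : ℕ) = 3 ^ 2 := by norm_num
                    _ ∣ 3 ^ k := pow_dvd_pow 3 hk2)
    subst hk1
    refine ⟨(n : ZMod (3 ^ 1)), 0, ?_⟩
    have hcube : ∀ z : ZMod (3 ^ 1), z ^ 3 = z := by decide
    rw [hcube]
    ring
  have hbase : ∃ x y : ℤ, x ^ 3 + y ^ 3 ≡ n [ZMOD (p : ℤ)] ∧ ¬ (p : ℤ) ∣ 3 * x ^ 2 := by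
    by_cases hp7 : p = 7
    · subst hp7
      have h37 : ¬ (7 : ℤ) ∣ 3 * 1 ^ 2 := by decide
      have h37' : ¬ (7 : ℤ) ∣ 3 * (-1 : ℤ) ^ 2 := by decide
      rcases hn with h | h | h | h | h
      · exact ⟨1, -1, by show _ % _ = _ % _; norm_num [h], h37⟩
      · exact ⟨1, 0, by show _ % _ = _ % _; norm_num [h], h37⟩
      · exact ⟨1, 1, by show _ % _ = _ % _; norm_num [h], h37⟩
      · exact ⟨-1, -1, by show _ % _ = _ % _; norm_num [h], h37'⟩
      · exact ⟨-1, 0, by show _ % _ = _ % _; norm_num [h], h37'⟩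
    · exact base_any_prime hp hp3 hp7 n
  obtain ⟨x, y, hxy, hx⟩ := hbase
  obtain ⟨X, Y, hXY, -⟩ := hensel_cubes hp hxy hx k hk
  apply solCubes_of_modEq (p := p ^ k)
  have hcast : ((p ^ k : ℕ) : ℤ) = (p : ℤ) ^ k := by push_cast; ring
  rwa [hcast]

lemma solCubes_all (n : ℤ)
    (hn : n % 7 = 0 ∨ n % 7 = 1 ∨ n % 7 = 2 ∨ n % 7 = 5 ∨ n % 7 = 6) :
    ∀ m : ℕ, ¬ 9 ∣ m → SolCubes m n := by
  intro m
  induction m using Nat.recOnPosPrimePosCoprime with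
  | prime_pow p k hp hk =>
    intro h9
    exact solCubes_prime_pow hp hk h9 n hn
  | zero => exact fun h9 => absurd (dvd_zero 9) h9
  | one => exact fun _ => ⟨0, 0, Subsingleton.elim _ _⟩
  | coprime a b ha hb hab iha ihb =>
    intro h9
    exact solCubes_mul hab (iha fun hd => h9 (hd.mul_right b))
      (ihb fun hd => h9 (hd.mul_left a))

theorem stmt_5 (N : ℕ) (hN : 0 < N) (h7 : 7 ∣ N) (h9 : ¬ 9 ∣ N) (n : ℤ)
    (hn : n % 7 = 0 ∨ n % 7 = 1 ∨ n % 7 = 2 ∨ n % 7 = 5 ∨ n % 7 = 6) :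
    ∃ u v : ℤ, n ≡ u ^ 3 + v ^ 3 [ZMOD N] := by
  obtain ⟨X, Y, hXY⟩ := solCubes_all n hn N h9
  obtain ⟨u, rfl⟩ := ZMod.intCast_surjective X
  obtain ⟨v, rfl⟩ := ZMod.intCast_surjective Y
  refine ⟨u, v, ?_⟩
  rw [← ZMod.intCast_eq_intCast_iff]
  push_cast
  exact hXY.symm
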